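/- Let f_1,…,f_T : ℝ^d → ℝ, let (u_t)_{t=1}^{T} satisfy u_{t+1} = u_t − (1/t)∇_t with ‖∇_t‖ ≤ G2 for all 1 ≤ t ≤ T−1, and suppose |f_t(u_T) − f_t(u_t)| ≤ G2·‖u_T − u_t‖ for every 1 ≤ t ≤ T. If f : ℝ^d → ℝ satisfies f(u) = (1/T)·Σ_{t=1}^T f_t(u) for all u, then f(u_T) ≤ (1/T)·Σ_{t=1}^T f_t(u_t) + G2²·(T−1)/T. -/

import Mathlib

open Finset

/-- If `f = (1/T)Σ f_t`, the iterates satisfy `u_{t+1} = u_t − (1/t)∇_t` with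
`‖∇_t‖ ≤ G2`, and each `f_t` is `G2`-Lipschitz between `u_T` and `u_t`, then
`f(u_T) ≤ (1/T)Σ f_t(u_t) + G2²(T−1)/T`. -/
theorem twsvm_final_iterate_objective_bound
    (d T : ℕ) (hT : 1 ≤ T)
    (f : ℕ → EuclideanSpace ℝ (Fin d) → ℝ) (F : EuclideanSpace ℝ (Fin d) → ℝ)
    (u g : ℕ → EuclideanSpace ℝ (Fin d)) (G2 : ℝ)
    (hstep : ∀ t, 1 ≤ t → t ≤ T - 1 → u (t + 1) = u t - (1 / (t : ℝ)) • g t)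
    (hg : ∀ t, 1 ≤ t → t ≤ T - 1 → ‖g t‖ ≤ G2)
    (hLip : ∀ t, 1 ≤ t → t ≤ T → |f t (u T) - f t (u t)| ≤ G2 * ‖u T - u t‖)
    (hF : ∀ x, F x = (1 / (T : ℝ)) * ∑ t ∈ Finset.Icc 1 T, f t x) :
    F (u T) ≤ (1 / (T : ℝ)) * ∑ t ∈ Finset.Icc 1 T, f t (u t)
      + G2 ^ 2 * ((T : ℝ) - 1) / T := by
  rw [hF]
  rcases eq_or_lt_of_le hT with hT1 | hT2
  · -- T = 1
    subst hT1
    simp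
  -- T ≥ 2
  have hT2' : 2 ≤ T := hT2
  have hG2 : 0 ≤ G2 := le_trans (norm_nonneg _) (hg 1 le_rfl (by omega))
  -- distance bound
  have key : ∀ t, 1 ≤ t → ∀ k, t ≤ k → k ≤ T →
      ‖u k - u t‖ ≤ G2 * ∑ s ∈ Ico t k, (1 : ℝ) / s := by
    intro t ht k hk hkT
    induction k, hk using Nat.le_induction with
    | base => simp
    | succ k hk ih =>
      have hkT' : k ≤ T - 1 := by omega
      have ih' := ih (by omega)
      have hstep' := hstep k (by omega) hkT'
      have : u (k + 1) - u t = (u k - u t) - (1 / (k : ℝ)) • g k := by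
        rw [hstep']; abel
      rw [this]
      calc ‖(u k - u t) - (1 / (k : ℝ)) • g k‖
          ≤ ‖u k - u t‖ + ‖(1 / (k : ℝ)) • g k‖ := norm_sub_le _ _
        _ ≤ G2 * ∑ s ∈ Ico t k, (1 : ℝ) / s + (1 / (k : ℝ)) * G2 := by
            gcongr
            rw [norm_smul]
            have hk1 : (1 : ℝ) ≤ (k : ℝ) := by exact_mod_cast (by omega : 1 ≤ k)
            have : ‖(1 / (k : ℝ))‖ = 1 / (k : ℝ) := by
              rw [Real.norm_eq_abs, abs_of_nonneg]; positivity
            rw [this]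
            exact mul_le_mul_of_nonneg_left (hg k (by omega) hkT') (by positivity)
        _ = G2 * ∑ s ∈ Ico t (k + 1), (1 : ℝ) / s := by
            rw [Finset.sum_Ico_succ_top hk]; ring
  -- per-term bound
  have bound : ∀ t ∈ Icc 1 T, f t (u T) ≤ f t (u t) + G2 ^ 2 * ∑ s ∈ Ico t T, (1 : ℝ) / s := by
    intro t ht
    rw [Finset.mem_Icc] at ht
    have h1 := hLip t ht.1 ht.2
    have h2 := key t ht.1 T ht.2 le_rfl
    have h3 : f t (u T) - f t (u t) ≤ G2 * ‖u T - u t‖ := le_trans (le_abs_self _) h1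
    nlinarith [mul_le_mul_of_nonneg_left h2 hG2]
  -- double sum
  have dsum : ∑ t ∈ Icc 1 T, ∑ s ∈ Ico t T, (1 : ℝ) / s = (T : ℝ) - 1 := by
    rw [Finset.sum_comm' (t' := Ico 1 T) (s' := fun s => Icc 1 s)
      (by intro t s; simp only [Finset.mem_Icc, Finset.mem_Ico]; omega)]
    have : ∀ s ∈ Ico 1 T, ∑ _t ∈ Icc 1 s, (1 : ℝ) / s = 1 := by
      intro s hs
      rw [Finset.mem_Ico] at hs
      rw [Finset.sum_const, Nat.card_Icc]
      have hs1 : (1 : ℝ) ≤ (s : ℝ) := by exact_mod_cast hs.1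
      rw [Nat.add_sub_cancel, nsmul_eq_mul, mul_one_div_cancel (ne_of_gt (by linarith))]
    rw [Finset.sum_congr rfl this]
    rw [Finset.sum_const, Nat.card_Ico]
    have : ((T - 1 : ℕ) : ℝ) = (T : ℝ) - 1 := by
      have : (1 : ℕ) ≤ T := hT
      push_cast [this]; ring
    simp [this]
  -- combine
  have sum_le : ∑ t ∈ Icc 1 T, f t (u T)
      ≤ ∑ t ∈ Icc 1 T, f t (u t) + G2 ^ 2 * ((T : ℝ) - 1) := by
    calc ∑ t ∈ Icc 1 T, f t (u T)
        ≤ ∑ t ∈ Icc 1 T, (f t (u t) + G2 ^ 2 * ∑ s ∈ Ico t T, (1 : ℝ) / s) :=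
          Finset.sum_le_sum bound
      _ = ∑ t ∈ Icc 1 T, f t (u t)
          + G2 ^ 2 * ∑ t ∈ Icc 1 T, ∑ s ∈ Ico t T, (1 : ℝ) / s := by
          rw [Finset.sum_add_distrib, Finset.mul_sum]
      _ = _ := by rw [dsum]
  have hTpos : (0 : ℝ) < T := by exact_mod_cast hT
  have h := mul_le_mul_of_nonneg_left sum_le (le_of_lt (one_div_pos.mpr hTpos))
  calc (1 / (T : ℝ)) * ∑ t ∈ Icc 1 T, f t (u T)
      ≤ (1 / (T : ℝ)) * (∑ t ∈ Icc 1 T, f t (u t) + G2 ^ 2 * ((T : ℝ) - 1)) := h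
    _ = (1 / (T : ℝ)) * ∑ t ∈ Icc 1 T, f t (u t) + G2 ^ 2 * ((T : ℝ) - 1) / T := by
        field_simp
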